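/- Assume d ≥ 1 and 2 + 4/d < p + 1 < 2*. For every η ∈ (0, Ñ₂) and every α > 0, there exists f ∈ PW₊ such that Ñ₂(f) = η and ‖f‖_{L²} = α. -/

import Mathlib

open MeasureTheory Filter Set
open scoped ENNReal Topology

noncomputable section

abbrev Euc (d : ℕ) := EuclideanSpace ℝ (Fin d)

def gradSq (d : ℕ) (f : Euc d → ℂ) : ℝ := ∫ x, ‖fderiv ℝ f x‖ ^ 2

def ppow (d : ℕ) (q : ℝ) (f : Euc d → ℂ) : ℝ := ∫ x, ‖f x‖ ^ q

def l2norm (d : ℕ) (f : Euc d → ℂ) : ℝ := Real.sqrt (ppow d 2 f)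

def InH1 (d : ℕ) (f : Euc d → ℂ) : Prop :=
  MemLp f 2 (volume : Measure (Euc d)) ∧ Differentiable ℝ f ∧
    Integrable (fun x => ‖fderiv ℝ f x‖ ^ 2) (volume : Measure (Euc d))

def Hfun (d : ℕ) (p : ℝ) (f : Euc d → ℂ) : ℝ :=
  gradSq d f - (2 / (p + 1)) * ppow d (p + 1) f

def Kfun (d : ℕ) (p : ℝ) (f : Euc d → ℂ) : ℝ :=
  gradSq d f - ((d : ℝ) * (p - 1) / (2 * (p + 1))) * ppow d (p + 1) f

def Adm (d : ℕ) (p : ℝ) (f : Euc d → ℂ) : Prop :=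
  InH1 d f ∧ MemLp f (ENNReal.ofReal (p + 1)) (volume : Measure (Euc d)) ∧
    ¬ (f =ᵐ[(volume : Measure (Euc d))] (0 : Euc d → ℂ))

def N2fun (d : ℕ) (p : ℝ) (f : Euc d → ℂ) : ℝ :=
  l2norm d f ^ (p + 1 - (d : ℝ) * (p - 1) / 2) *
    Real.sqrt (gradSq d f) ^ ((d : ℝ) * (p - 1) / 2 - 2)

def N2val (d : ℕ) (p : ℝ) : ℝ :=
  sInf {r : ℝ | ∃ f : Euc d → ℂ, Adm d p f ∧ Kfun d p f ≤ 0 ∧ r = N2fun d p f}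

/-- `Ñ₂(f) = ‖f‖_{L²}^{p+1−d(p−1)/2} √(ℋ(f))^{d(p−1)/2−2}`. -/
def tildeN2fun (d : ℕ) (p : ℝ) (f : Euc d → ℂ) : ℝ :=
  l2norm d f ^ (p + 1 - (d : ℝ) * (p - 1) / 2) *
    Real.sqrt (Hfun d p f) ^ ((d : ℝ) * (p - 1) / 2 - 2)

/-- `Ñ₂ = √((d(p−1)−4)/(d(p−1)))^{d(p−1)/2−2} N₂`. -/
def tildeN2val (d : ℕ) (p : ℝ) : ℝ :=
  Real.sqrt (((d : ℝ) * (p - 1) - 4) / ((d : ℝ) * (p - 1))) ^ ((d : ℝ) * (p - 1) / 2 - 2) *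
    N2val d p

/-- `PW₊ = { f ∈ H¹ : 𝒦(f) > 0, Ñ₂(f) < Ñ₂ }` (the alternative expression). -/
def PWplusT (d : ℕ) (p : ℝ) : Set (Euc d → ℂ) :=
  {f | Adm d p f ∧ 0 < Kfun d p f ∧ tildeN2fun d p f < tildeN2val d p}

namespace PWaux

variable {d : ℕ}

lemma int_comp_smul (g : Euc d → ℝ) {l : ℝ} (hl : 0 < l) :
    (∫ x : Euc d, g (l • x)) = (l ^ d)⁻¹ * ∫ x, g x := by
  rw [MeasureTheory.Measure.integral_comp_smul volume g l, smul_eq_mul, finrank_euclideanSpace_fin,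
    abs_of_nonneg (by positivity)]

lemma ppow_scale (φ : ContDiffBump (0 : Euc d)) (q : ℝ) {β l : ℝ} (hβ : 0 ≤ β) (hl : 0 < l) :
    ppow d q (fun x => ((β * φ (l • x) : ℝ) : ℂ)) = β ^ q * ((l ^ d)⁻¹ * ∫ x, φ x ^ q) := by
  unfold ppow
  have h1 : ∀ x : Euc d, ‖((β * φ (l • x) : ℝ) : ℂ)‖ ^ q = β ^ q * φ (l • x) ^ q := by
    intro x
    rw [Complex.norm_real, Real.norm_eq_abs, abs_of_nonneg (mul_nonneg hβ φ.nonneg),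
      Real.mul_rpow hβ φ.nonneg]
  simp_rw [h1]
  rw [MeasureTheory.integral_const_mul, int_comp_smul (fun x => φ x ^ q) hl]

lemma hasFDerivAt_scale (φ : ContDiffBump (0 : Euc d)) (β l : ℝ) (x : Euc d) :
    HasFDerivAt (fun y : Euc d => ((β * φ (l • y) : ℝ) : ℂ))
      (Complex.ofRealLI.toContinuousLinearMap.comp ((β * l) • fderiv ℝ φ (l • x))) x := by
  have h1 : HasFDerivAt (fun y : Euc d => l • y) (l • ContinuousLinearMap.id ℝ (Euc d)) x :=
    (hasFDerivAt_id x).const_smul l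
  have h2 : HasFDerivAt φ (fderiv ℝ φ (l • x)) (l • x) :=
    ((φ.contDiff (n := 1)).differentiable (by simp) (l • x)).hasFDerivAt
  have h3 := (h2.comp x h1).const_mul β
  have h4 := Complex.ofRealLI.toContinuousLinearMap.hasFDerivAt.comp x h3
  have heq : Complex.ofRealLI.toContinuousLinearMap.comp
        (β • ((fderiv ℝ φ (l • x)).comp (l • ContinuousLinearMap.id ℝ (Euc d))))
      = Complex.ofRealLI.toContinuousLinearMap.comp ((β * l) • fderiv ℝ φ (l • x)) := by
    congr 1
    ext v
    simp [smul_smul, mul_comm]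
  rw [heq] at h4
  exact h4

lemma norm_fderiv_scale (φ : ContDiffBump (0 : Euc d)) {β l : ℝ} (hβ : 0 ≤ β) (hl : 0 ≤ l)
    (x : Euc d) :
    ‖fderiv ℝ (fun y : Euc d => ((β * φ (l • y) : ℝ) : ℂ)) x‖ = β * l * ‖fderiv ℝ φ (l • x)‖ := by
  rw [(hasFDerivAt_scale φ β l x).fderiv, LinearIsometry.norm_toContinuousLinearMap_comp,
    norm_smul, Real.norm_eq_abs, abs_of_nonneg (mul_nonneg hβ hl)]

lemma gradSq_scale (φ : ContDiffBump (0 : Euc d)) {β l : ℝ} (hβ : 0 ≤ β) (hl : 0 < l) :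
    gradSq d (fun x => ((β * φ (l • x) : ℝ) : ℂ))
      = (β * l) ^ 2 * ((l ^ d)⁻¹ * ∫ x, ‖fderiv ℝ φ x‖ ^ 2) := by
  unfold gradSq
  have h1 : ∀ x : Euc d, ‖fderiv ℝ (fun y : Euc d => ((β * φ (l • y) : ℝ) : ℂ)) x‖ ^ 2
      = (β * l) ^ 2 * ‖fderiv ℝ φ (l • x)‖ ^ 2 := by
    intro x; rw [norm_fderiv_scale φ hβ hl.le x, mul_pow]
  simp_rw [h1]
  rw [MeasureTheory.integral_const_mul, int_comp_smul (fun x => ‖fderiv ℝ φ x‖ ^ 2) hl]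

lemma integrable_fderiv_sq (φ : ContDiffBump (0 : Euc d)) :
    Integrable (fun x : Euc d => ‖fderiv ℝ φ x‖ ^ 2) := by
  apply Continuous.integrable_of_hasCompactSupport
  · exact (((φ.contDiff (n := 1)).continuous_fderiv (by simp)).norm.pow 2)
  · exact (φ.hasCompactSupport.fderiv (𝕜 := ℝ)).comp_left (g := fun D : Euc d →L[ℝ] ℝ => ‖D‖ ^ 2)
      (by simp)

lemma int_rpow_pos (φ : ContDiffBump (0 : Euc d)) {q : ℝ} (hq : 0 < q) :
    0 < ∫ x : Euc d, φ x ^ q := by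
  have hnn : ∀ x : Euc d, 0 ≤ φ x ^ q := fun x => Real.rpow_nonneg φ.nonneg q
  have hint : Integrable (fun x : Euc d => φ x ^ q) := by
    apply Continuous.integrable_of_hasCompactSupport
    · exact φ.continuous.rpow_const (fun x => Or.inr hq.le)
    · exact φ.hasCompactSupport.comp_left (g := fun t : ℝ => t ^ q) (Real.zero_rpow hq.ne')
  rw [MeasureTheory.integral_pos_iff_support_of_nonneg hnn hint]
  have hsub : Metric.ball (0 : Euc d) φ.rOut ⊆ Function.support fun x : Euc d => φ x ^ q := by
    intro x hx
    have := φ.pos_of_mem_ball hx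
    simp only [Function.mem_support]
    exact (Real.rpow_pos_of_pos this q).ne'
  calc (0 : ℝ≥0∞) < volume (Metric.ball (0 : Euc d) φ.rOut) :=
        Metric.measure_ball_pos volume 0 φ.rOut_pos
    _ ≤ _ := measure_mono hsub

lemma exists_fderiv_ne (hd : 1 ≤ d) (φ : ContDiffBump (0 : Euc d)) :
    ∃ x : Euc d, fderiv ℝ φ x ≠ 0 := by
  by_contra h
  push_neg at h
  have hconst := is_const_of_fderiv_eq_zero (𝕜 := ℝ)
    ((φ.contDiff (n := 1)).differentiable (by simp)) h
  have h1 : φ 0 = 1 := φ.one_of_mem_closedBall (by simp [φ.rIn_pos.le])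
  set y : Euc d := EuclideanSpace.single (⟨0, hd⟩ : Fin d) (φ.rOut + 1)
  have hy : φ.rOut ≤ dist y 0 := by
    rw [dist_zero_right]
    rw [EuclideanSpace.norm_single]
    rw [Real.norm_eq_abs, abs_of_nonneg (by linarith [φ.rOut_pos])]
    linarith
  have h2 : φ y = 0 := φ.zero_of_le_dist hy
  have := hconst 0 y
  rw [h1, h2] at this
  exact one_ne_zero this

lemma int_fderiv_sq_pos (hd : 1 ≤ d) (φ : ContDiffBump (0 : Euc d)) :
    0 < ∫ x : Euc d, ‖fderiv ℝ φ x‖ ^ 2 := by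
  obtain ⟨x₀, hx₀⟩ := exists_fderiv_ne hd φ
  have hnn : ∀ x : Euc d, 0 ≤ ‖fderiv ℝ φ x‖ ^ 2 := fun x => by positivity
  rw [MeasureTheory.integral_pos_iff_support_of_nonneg hnn (integrable_fderiv_sq φ)]
  have hopen : IsOpen {x : Euc d | fderiv ℝ φ x ≠ 0} :=
    isOpen_ne.preimage ((φ.contDiff (n := 1)).continuous_fderiv (by simp))
  have hsub : {x : Euc d | fderiv ℝ φ x ≠ 0} ⊆ Function.support fun x : Euc d => ‖fderiv ℝ φ x‖ ^ 2 := by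
    intro x hx
    simp only [Function.mem_support]
    exact pow_ne_zero 2 (norm_ne_zero_iff.2 hx)
  calc (0 : ℝ≥0∞) < volume {x : Euc d | fderiv ℝ φ x ≠ 0} :=
        hopen.measure_pos volume ⟨x₀, hx₀⟩
    _ ≤ _ := measure_mono hsub

lemma adm_scale (φ : ContDiffBump (0 : Euc d)) (p : ℝ) {β l : ℝ} (hβ : 0 < β) (hl : 0 < l) :
    Adm d p (fun x : Euc d => ((β * φ (l • x) : ℝ) : ℂ)) := by
  have hcont : Continuous fun x : Euc d => ((β * φ (l • x) : ℝ) : ℂ) :=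
    Complex.continuous_ofReal.comp (continuous_const.mul (φ.continuous.comp (continuous_const_smul l)))
  have hcs0 : HasCompactSupport fun x : Euc d => φ (l • x) :=
    φ.hasCompactSupport.comp_smul hl.ne'
  have hcs : HasCompactSupport fun x : Euc d => ((β * φ (l • x) : ℝ) : ℂ) :=
    hcs0.comp_left (g := fun t : ℝ => ((β * t : ℝ) : ℂ)) (by simp)
  have hdiff : Differentiable ℝ fun x : Euc d => ((β * φ (l • x) : ℝ) : ℂ) :=
    fun x => (hasFDerivAt_scale φ β l x).differentiableAt
  have hint : Integrable (fun x : Euc d =>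
      ‖fderiv ℝ (fun y : Euc d => ((β * φ (l • y) : ℝ) : ℂ)) x‖ ^ 2) := by
    have h1 : ∀ x : Euc d, ‖fderiv ℝ (fun y : Euc d => ((β * φ (l • y) : ℝ) : ℂ)) x‖ ^ 2
        = (β * l) ^ 2 * ‖fderiv ℝ φ (l • x)‖ ^ 2 := by
      intro x; rw [norm_fderiv_scale φ hβ.le hl.le x, mul_pow]
    simp_rw [h1]
    exact ((MeasureTheory.integrable_comp_smul_iff volume
      (fun x : Euc d => ‖fderiv ℝ φ x‖ ^ 2) hl.ne').2 (integrable_fderiv_sq φ)).const_mul _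
  have hnz : ¬ ((fun x : Euc d => ((β * φ (l • x) : ℝ) : ℂ))
      =ᵐ[(volume : Measure (Euc d))] (0 : Euc d → ℂ)) := by
    intro hae
    have h0 : ppow d 2 (fun x : Euc d => ((β * φ (l • x) : ℝ) : ℂ)) = 0 := by
      unfold ppow
      rw [MeasureTheory.integral_congr_ae (g := fun _ : Euc d => (0 : ℝ))
        (hae.mono fun x hx => by
          rw [hx]; simp [Real.zero_rpow (two_ne_zero : (2:ℝ) ≠ 0)])]
      simp
    have hpos : 0 < ppow d 2 (fun x : Euc d => ((β * φ (l • x) : ℝ) : ℂ)) := by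
      rw [ppow_scale φ 2 hβ.le hl]
      have h2 := int_rpow_pos φ (q := 2) two_pos
      have h3 : (0:ℝ) < β ^ (2:ℝ) := Real.rpow_pos_of_pos hβ 2
      positivity
    linarith
  exact ⟨⟨hcont.memLp_of_hasCompactSupport hcs, hdiff, hint⟩,
    hcont.memLp_of_hasCompactSupport hcs, hnz⟩

lemma rpow_two' (x : ℝ) : x ^ (2:ℝ) = x ^ 2 := by
  rw [show (2:ℝ) = ((2:ℕ):ℝ) by norm_num, Real.rpow_natCast]

lemma lrinv {l : ℝ} (hl : 0 < l) (d : ℕ) : ((l:ℝ) ^ d)⁻¹ = l ^ (-(d:ℝ)) := by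
  rw [← Real.rpow_natCast l d, ← Real.rpow_neg hl.le]

lemma sqrt_rpow' {l : ℝ} (hl : 0 < l) (a : ℝ) : Real.sqrt (l ^ a) = l ^ (a/2) := by
  rw [Real.sqrt_eq_rpow, ← Real.rpow_mul hl.le]
  ring_nf

end PWaux

set_option maxHeartbeats 1000000 in
/-- foliation of `PW₊`: for every `η ∈ (0, Ñ₂)` and every `α > 0` there
exists `f ∈ PW₊` with `Ñ₂(f) = η` and `‖f‖_{L²} = α`. -/
theorem PWplus_foliation (d : ℕ) (p : ℝ) (hd : 1 ≤ d)
    (hp1 : 2 + 4 / (d : ℝ) < p + 1)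
    (hp2 : 3 ≤ d → p + 1 < 2 * (d : ℝ) / ((d : ℝ) - 2)) :
    ∀ η : ℝ, 0 < η → η < tildeN2val d p → ∀ α : ℝ, 0 < α →
      ∃ f : Euc d → ℂ, f ∈ PWplusT d p ∧ tildeN2fun d p f = η ∧ l2norm d f = α := by
  intro η hη hηlt α hα
  have hd0 : (0:ℝ) < d := by
    have : (1:ℝ) ≤ (d:ℝ) := by exact_mod_cast hd
    linarith
  have hp0 : 0 < p - 1 := by
    have h4d : 0 < 4 / (d:ℝ) := by positivity
    linarith
  have hp4 : 4 < (d:ℝ) * (p - 1) := by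
    have h1 : 4 / (d:ℝ) < p - 1 := by linarith
    have := (div_lt_iff₀ hd0).1 h1
    nlinarith
  have hq0 : (0:ℝ) < p + 1 := by linarith
  set A : ℝ := p + 1 - (d : ℝ) * (p - 1) / 2 with hA
  set B : ℝ := (d : ℝ) * (p - 1) / 2 - 2 with hB
  have hBpos : 0 < B := by rw [hB]; linarith
  have hApos : 0 < A := by
    rw [hA]
    rcases le_or_gt 3 d with h3 | h3
    · have hlt := hp2 h3
      have hd3 : (3:ℝ) ≤ (d:ℝ) := by exact_mod_cast h3
      have hd2 : (0:ℝ) < (d:ℝ) - 2 := by linarith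
      rw [lt_div_iff₀ hd2] at hlt
      nlinarith
    · have hd2 : (d:ℝ) ≤ 2 := by
        have : d ≤ 2 := by omega
        exact_mod_cast this
      nlinarith
  set φ : ContDiffBump (0 : Euc d) := ⟨1, 2, one_pos, one_lt_two⟩ with hφ
  set G : ℝ := ∫ x : Euc d, ‖fderiv ℝ φ x‖ ^ 2 with hGdef
  set Pq : ℝ := ∫ x : Euc d, φ x ^ (p + 1) with hPqdef
  set M : ℝ := ∫ x : Euc d, φ x ^ (2:ℝ) with hMdef
  have hGpos : 0 < G := PWaux.int_fderiv_sq_pos hd φ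
  have hPqpos : 0 < Pq := PWaux.int_rpow_pos φ hq0
  have hMpos : 0 < M := PWaux.int_rpow_pos φ two_pos
  set cK : ℝ := (d : ℝ) * (p - 1) / (2 * (p + 1)) with hcK
  set cH : ℝ := 2 / (p + 1) with hcH
  have hcKpos : 0 < cK := by rw [hcK]; positivity
  -- s₁ : the zero of K along s ↦ s·φ
  set s₁ : ℝ := (G / (cK * Pq)) ^ ((1:ℝ)/(p-1)) with hs₁def
  have hs₁pos : 0 < s₁ := Real.rpow_pos_of_pos (by positivity) _
  have hs₁pow : s₁ ^ (p-1) = G / (cK * Pq) := by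
    rw [hs₁def, ← Real.rpow_mul (by positivity), one_div, inv_mul_cancel₀ hp0.ne', Real.rpow_one]
  have hsplit : ∀ s : ℝ, 0 < s → s ^ (p+1) = s ^ (2:ℝ) * s ^ (p-1) := by
    intro s hs
    rw [show p+1 = 2+(p-1) from by ring, Real.rpow_add hs]
  set T : ℝ → ℝ := fun s => Real.sqrt (s ^ (2:ℝ) * M) ^ A *
    Real.sqrt (s ^ (2:ℝ) * G - cH * (s ^ (p+1) * Pq)) ^ B with hTdef
  have hTcont : Continuous T := by
    have h2 : Continuous fun s : ℝ => s ^ (2:ℝ) :=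
      continuous_id.rpow_const (fun x => Or.inr (by norm_num))
    have hqc : Continuous fun s : ℝ => s ^ (p+1) :=
      continuous_id.rpow_const (fun x => Or.inr hq0.le)
    exact (((h2.mul continuous_const).sqrt).rpow_const (fun x => Or.inr hApos.le)).mul
      ((((h2.mul continuous_const).sub (continuous_const.mul (hqc.mul continuous_const))).sqrt).rpow_const
        (fun x => Or.inr hBpos.le))
  have hT0 : T 0 = 0 := by
    simp only [hTdef]
    rw [Real.zero_rpow (two_ne_zero : (2:ℝ) ≠ 0)]
    simp [Real.zero_rpow hApos.ne']
  -- K and N2fun at s₁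
  have hKle : Kfun d p (fun x : Euc d => ((s₁ * φ ((1:ℝ) • x) : ℝ) : ℂ)) ≤ 0 := by
    unfold Kfun
    rw [PWaux.gradSq_scale φ hs₁pos.le one_pos, PWaux.ppow_scale φ (p+1) hs₁pos.le one_pos, ← hcK]
    simp only [one_pow, inv_one, one_mul, mul_one]
    rw [← PWaux.rpow_two' s₁, hsplit s₁ hs₁pos, hs₁pow]
    have hz : s₁ ^ (2:ℝ) * G - cK * (s₁ ^ (2:ℝ) * (G / (cK * Pq)) * Pq) = 0 := by
      field_simp [hcKpos.ne', hPqpos.ne']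
      ring
    linarith
  have hN2f : N2fun d p (fun x : Euc d => ((s₁ * φ ((1:ℝ) • x) : ℝ) : ℂ))
      = Real.sqrt (s₁ ^ (2:ℝ) * M) ^ A * Real.sqrt (s₁ ^ (2:ℝ) * G) ^ B := by
    unfold N2fun l2norm
    rw [PWaux.ppow_scale φ 2 hs₁pos.le one_pos, PWaux.gradSq_scale φ hs₁pos.le one_pos, ← hA, ← hB]
    simp only [one_pow, inv_one, one_mul, mul_one]
    rw [← PWaux.rpow_two' s₁]
  have hbdd : BddBelow {r : ℝ | ∃ f : Euc d → ℂ, Adm d p f ∧ Kfun d p f ≤ 0 ∧ r = N2fun d p f} := by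
    refine ⟨0, fun r hr => ?_⟩
    obtain ⟨f, -, -, rfl⟩ := hr
    unfold N2fun l2norm
    exact mul_nonneg (Real.rpow_nonneg (Real.sqrt_nonneg _) _)
      (Real.rpow_nonneg (Real.sqrt_nonneg _) _)
  have hN2le : N2val d p ≤ N2fun d p (fun x : Euc d => ((s₁ * φ ((1:ℝ) • x) : ℝ) : ℂ)) :=
    csInf_le hbdd ⟨_, PWaux.adm_scale φ p hs₁pos one_pos, hKle, rfl⟩
  set rr : ℝ := ((d:ℝ) * (p - 1) - 4) / ((d:ℝ) * (p - 1)) with hrdef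
  have hrpos : 0 < rr := by
    rw [hrdef]
    have h1 : (0:ℝ) < (d:ℝ) * (p-1) := by nlinarith
    exact div_pos (by linarith) h1
  have hH1 : s₁ ^ (2:ℝ) * G - cH * (s₁ ^ (p+1) * Pq) = rr * (s₁ ^ (2:ℝ) * G) := by
    rw [hsplit s₁ hs₁pos, hs₁pow, hrdef, hcH, hcK]
    have hne1 : (d:ℝ) * (p - 1) ≠ 0 := by positivity
    field_simp
    ring
  have hTs₁ : tildeN2val d p ≤ T s₁ := by
    have h1 : T s₁ = Real.sqrt rr ^ B *
        (Real.sqrt (s₁ ^ (2:ℝ) * M) ^ A * Real.sqrt (s₁ ^ (2:ℝ) * G) ^ B) := by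
      simp only [hTdef]
      rw [hH1, Real.sqrt_mul hrpos.le, Real.mul_rpow (Real.sqrt_nonneg _) (Real.sqrt_nonneg _)]
      ring
    rw [h1, ← hN2f]
    unfold tildeN2val
    rw [← hB, ← hrdef]
    exact mul_le_mul_of_nonneg_left hN2le (Real.rpow_nonneg (Real.sqrt_nonneg _) _)
  -- IVT
  obtain ⟨s₀, hs₀mem, hTs₀⟩ := intermediate_value_Icc hs₁pos.le hTcont.continuousOn
    ⟨by rw [hT0]; exact hη.le, le_trans hηlt.le hTs₁⟩
  have hs₀pos : 0 < s₀ := by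
    rcases lt_or_eq_of_le hs₀mem.1 with h | h
    · exact h
    · exfalso
      rw [← h, hT0] at hTs₀
      exact hη.ne hTs₀
  have hs₀lt : s₀ < s₁ := by
    rcases lt_or_eq_of_le hs₀mem.2 with h | h
    · exact h
    · exfalso
      rw [h] at hTs₀
      linarith
  have hs₀pow : s₀ ^ (p-1) < G / (cK * Pq) := by
    rw [← hs₁pow]
    exact Real.rpow_lt_rpow hs₀pos.le hs₀lt hp0
  have hK₀pos : 0 < s₀ ^ (2:ℝ) * G - cK * (s₀ ^ (p+1) * Pq) := by
    rw [hsplit s₀ hs₀pos]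
    have h2 : 0 < s₀ ^ (2:ℝ) := Real.rpow_pos_of_pos hs₀pos _
    have h3 : s₀ ^ (p-1) * (cK * Pq) < G := (lt_div_iff₀ (by positivity)).1 hs₀pow
    have h4 := mul_lt_mul_of_pos_left h3 h2
    have h5 : cK * (s₀ ^ (2:ℝ) * s₀ ^ (p-1) * Pq) = s₀ ^ (2:ℝ) * (s₀ ^ (p-1) * (cK * Pq)) := by
      ring
    linarith [h4, h5.le, h5.ge]
  -- Step 2 : dilation
  set E : ℝ := 4/(p-1) + 2 - (d:ℝ) with hEdef
  set cv : ℝ := 4/(p-1) - (d:ℝ) with hcvdef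
  have hcvne : cv ≠ 0 := by
    rw [hcvdef]
    have h1 : 4/(p-1) < (d:ℝ) := (div_lt_iff₀ hp0).2 (by nlinarith)
    linarith
  set L1 : ℝ := Real.sqrt (s₀ ^ (2:ℝ) * M) with hL1def
  have hL1pos : 0 < L1 := by
    rw [hL1def]
    apply Real.sqrt_pos.2
    have h2 : 0 < s₀ ^ (2:ℝ) := Real.rpow_pos_of_pos hs₀pos _
    positivity
  set l : ℝ := ((α / L1) ^ (2:ℝ)) ^ ((1:ℝ)/cv) with hldef
  have hALpos : 0 < α / L1 := div_pos hα hL1pos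
  have hlpos : 0 < l := Real.rpow_pos_of_pos (Real.rpow_pos_of_pos hALpos _) _
  have hlcv : l ^ cv = (α / L1) ^ (2:ℝ) := by
    rw [hldef, ← Real.rpow_mul (Real.rpow_pos_of_pos hALpos _).le, one_div,
      inv_mul_cancel₀ hcvne, Real.rpow_one]
  set β : ℝ := s₀ * l ^ (2/(p-1)) with hβdef
  have hβpos : 0 < β := mul_pos hs₀pos (Real.rpow_pos_of_pos hlpos _)
  have hβ2 : β ^ 2 = s₀ ^ (2:ℝ) * l ^ (4/(p-1)) := by
    rw [hβdef, mul_pow, ← PWaux.rpow_two' s₀, ← PWaux.rpow_two' (l ^ (2/(p-1))),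
      ← Real.rpow_mul hlpos.le, show (2/(p-1)*2 : ℝ) = 4/(p-1) from by ring]
  have hβq : β ^ (p+1) = s₀ ^ (p+1) * l ^ (2/(p-1)*(p+1)) := by
    rw [hβdef, Real.mul_rpow hs₀pos.le (Real.rpow_pos_of_pos hlpos _).le,
      ← Real.rpow_mul hlpos.le]
  have hgrad : gradSq d (fun x : Euc d => ((β * φ (l • x) : ℝ) : ℂ))
      = l ^ E * (s₀ ^ (2:ℝ) * G) := by
    rw [PWaux.gradSq_scale φ hβpos.le hlpos, mul_pow, hβ2, PWaux.lrinv hlpos,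
      ← PWaux.rpow_two' l, show E = 4/(p-1) + ((2:ℝ) + -(d:ℝ)) from by rw [hEdef]; ring,
      Real.rpow_add hlpos, Real.rpow_add hlpos]
    ring
  have hppq : ppow d (p+1) (fun x : Euc d => ((β * φ (l • x) : ℝ) : ℂ))
      = l ^ E * (s₀ ^ (p+1) * Pq) := by
    rw [PWaux.ppow_scale φ (p+1) hβpos.le hlpos, hβq, PWaux.lrinv hlpos,
      show E = 2/(p-1)*(p+1) + -(d:ℝ) from by rw [hEdef]; field_simp; ring,
      Real.rpow_add hlpos]
    ring
  have hpp2 : ppow d 2 (fun x : Euc d => ((β * φ (l • x) : ℝ) : ℂ))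
      = (α/L1) ^ (2:ℝ) * (s₀ ^ (2:ℝ) * M) := by
    rw [PWaux.ppow_scale φ 2 hβpos.le hlpos, PWaux.rpow_two' β, hβ2, PWaux.lrinv hlpos, ← hlcv,
      show cv = 4/(p-1) + -(d:ℝ) from by rw [hcvdef]; ring, Real.rpow_add hlpos]
    ring
  have hl2 : l2norm d (fun x : Euc d => ((β * φ (l • x) : ℝ) : ℂ)) = α := by
    unfold l2norm
    rw [hpp2, Real.sqrt_mul (Real.rpow_nonneg hALpos.le _), PWaux.rpow_two' (α/L1),
      Real.sqrt_sq hALpos.le, ← hL1def]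
    field_simp
  have hHf : Hfun d p (fun x : Euc d => ((β * φ (l • x) : ℝ) : ℂ))
      = l ^ E * (s₀ ^ (2:ℝ) * G - cH * (s₀ ^ (p+1) * Pq)) := by
    unfold Hfun
    rw [hgrad, hppq, ← hcH]
    ring
  have hKf : Kfun d p (fun x : Euc d => ((β * φ (l • x) : ℝ) : ℂ))
      = l ^ E * (s₀ ^ (2:ℝ) * G - cK * (s₀ ^ (p+1) * Pq)) := by
    unfold Kfun
    rw [hgrad, hppq, ← hcK]
    ring
  have hKfpos : 0 < Kfun d p (fun x : Euc d => ((β * φ (l • x) : ℝ) : ℂ)) := by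
    rw [hKf]
    exact mul_pos (Real.rpow_pos_of_pos hlpos _) hK₀pos
  have hexp : cv * A + E * B = 0 := by
    rw [hcvdef, hEdef, hA, hB]
    field_simp
    ring
  have hαL : α ^ A = L1 ^ A * l ^ (cv/2 * A) := by
    have h2 : l ^ (cv/2) = α / L1 := by
      rw [show cv/2 = cv * ((1:ℝ)/2) from by ring, Real.rpow_mul hlpos.le, hlcv,
        ← Real.rpow_mul hALpos.le]
      norm_num
    have h1 : α = L1 * l ^ (cv/2) := by
      rw [h2]
      field_simp
    rw [h1, Real.mul_rpow hL1pos.le (Real.rpow_pos_of_pos hlpos _).le, ← Real.rpow_mul hlpos.le]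
  have htf : tildeN2fun d p (fun x : Euc d => ((β * φ (l • x) : ℝ) : ℂ)) = η := by
    unfold tildeN2fun
    rw [← hA, ← hB, hl2, hHf, hαL]
    rw [Real.sqrt_mul (Real.rpow_nonneg hlpos.le _), PWaux.sqrt_rpow' hlpos,
      Real.mul_rpow (Real.rpow_nonneg hlpos.le _) (Real.sqrt_nonneg _),
      ← Real.rpow_mul hlpos.le]
    have hone : l ^ (cv/2*A) * l ^ (E/2*B) = 1 := by
      rw [← Real.rpow_add hlpos, show cv/2*A + E/2*B = 0 from by linear_combination hexp / 2, Real.rpow_zero]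
    have hre : ∀ x y z w : ℝ, x*y*(z*w) = (x*w)*(y*z) := by intros; ring
    rw [hre, hone, mul_one, hL1def]
    simp only [hTdef] at hTs₀
    exact hTs₀
  refine ⟨fun x : Euc d => ((β * φ (l • x) : ℝ) : ℂ),
    ⟨PWaux.adm_scale φ p hβpos hlpos, hKfpos, by rw [htf]; exact hηlt⟩, htf, hl2⟩
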